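/- For every field K and every natural number n there is no injective group homomorphism from the direct product ∏_{p odd prime} (ℤ/pℤ)ˣ (the product, over all odd primes p, of the unit groups of ℤ/pℤ) into GL_n(K). In other words, the group ∏_{p odd prime} (ℤ/pℤ)ˣ is not linear over any field. -/

import Mathlib

open Polynomial Module

/-- Key counting lemma: a finite abelian group of exponent dividing `ℓ` (with `ℓ`
invertible in the algebraically closed field `L`) embedding in `GL n L` has order
at most `ℓ ^ n`. -/
lemma counting_lemma {L : Type} [Field L] [IsAlgClosed L] (n ℓ : ℕ) (hℓ0 : 0 < ℓ)
    (hℓL : (ℓ : L) ≠ 0) {G : Type} [CommGroup G] [Fintype G]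
    (ρ : G →* GL (Fin n) L) (hρ : Function.Injective ρ)
    (hord : ∀ g : G, g ^ ℓ = 1) : Fintype.card G ≤ ℓ ^ n := by
  classical
  set f : G → Module.End L (Fin n → L) :=
    fun g => Matrix.toLinAlgEquiv' ((ρ g : Matrix (Fin n) (Fin n) L)) with hfdef
  have hfinj : Function.Injective f := by
    intro g h hgh
    exact hρ (Units.ext (Matrix.toLinAlgEquiv'.injective hgh))
  have hcomm : ∀ g h : G, Commute (f g) (f h) := by
    intro g h
    have : (ρ g : Matrix (Fin n) (Fin n) L) * (ρ h) = (ρ h) * (ρ g) := by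
      rw [← Units.val_mul, ← Units.val_mul, ← map_mul, ← map_mul, mul_comm g h]
    simp only [hfdef, Commute, SemiconjBy, ← map_mul, this]
  have hpow : ∀ g : G, (f g) ^ ℓ = 1 := by
    intro g
    have : ((ρ g : Matrix (Fin n) (Fin n) L)) ^ ℓ = 1 := by
      rw [← Units.val_pow_eq_pow_val, ← map_pow, hord, map_one, Units.val_one]
    rw [hfdef, ← map_pow, this, map_one]
  have hss : ∀ g : G, (f g).IsFinitelySemisimple := by
    intro g
    refine (Module.End.isSemisimple_of_squarefree_aeval_eq_zero
      (p := X ^ ℓ - C 1) ?_ ?_).isFinitelySemisimple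
    · exact (Polynomial.separable_X_pow_sub_C (1 : L) hℓL one_ne_zero).squarefree
    · rw [map_sub, map_pow, aeval_X, aeval_C, hpow g, map_one, sub_self]
  have heig : ∀ (g : G) (μ : L),
      (f g).maxGenEigenspace μ = (f g).eigenspace μ := fun g μ =>
    (hss g).maxGenEigenspace_eq_eigenspace μ
  set P : (G → L) → Submodule L (Fin n → L) :=
    fun χ => ⨅ g, (f g).maxGenEigenspace (χ g) with hPdef
  have hTop : ⨆ χ : G → L, P χ = ⊤ :=
    Module.End.iSup_iInf_maxGenEigenspace_eq_top_of_iSup_maxGenEigenspace_eq_top_of_commute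
      f (fun g h _ => hcomm g h) (fun g => Module.End.iSup_maxGenEigenspace_eq_top (f g))
  have hInd : iSupIndep P :=
    Module.End.independent_iInf_maxGenEigenspace_of_forall_mapsTo f
      (fun i j φ => Module.End.mapsTo_maxGenEigenspace_of_comm (hcomm j i) φ)
  haveI : Fintype {χ : G → L // P χ ≠ ⊥} := hInd.fintypeNeBotOfFiniteDimensional
  have hcardS : Fintype.card {χ : G → L // P χ ≠ ⊥} ≤ n := by
    have := hInd.subtype_ne_bot_le_finrank
    rwa [Module.finrank_fin_fun] at this
  -- elements of `P χ` are eigenvectors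
  have key : ∀ (χ : G → L) (g : G), ∀ x ∈ P χ, f g x = χ g • x := by
    intro χ g x hx
    have hx' : x ∈ (f g).eigenspace (χ g) := by
      rw [← heig]
      exact (iInf_le (fun g => (f g).maxGenEigenspace (χ g)) g) hx
    exact Module.End.mem_eigenspace_iff.mp hx'
  -- eigenvalues on nonzero simultaneous eigenspaces are ℓ-th roots of unity
  have hroot : ∀ (χ : G → L), P χ ≠ ⊥ → ∀ g : G, (χ g) ^ ℓ = 1 := by
    intro χ hχ g
    obtain ⟨x, hx, hx0⟩ := Submodule.exists_mem_ne_zero_of_ne_bot hχ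
    have hpows : ∀ k : ℕ, ((f g) ^ k) x = (χ g) ^ k • x := by
      intro k
      induction k with
      | zero => simp
      | succ k ih =>
        rw [pow_succ', pow_succ', Module.End.mul_apply, ih, map_smul, key χ g x hx,
          smul_smul, mul_comm (χ g ^ k) (χ g)]
    have h1 : (χ g) ^ ℓ • x = (1 : L) • x := by
      rw [one_smul, ← hpows ℓ, hpow g, Module.End.one_apply]
    exact smul_left_injective L hx0 h1
  -- the injective "eigenvalue tuple" map
  set Φ : G → ({χ : G → L // P χ ≠ ⊥} → (Polynomial.nthRootsFinset ℓ (1 : L) : Finset L)) :=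
    fun g χ => ⟨χ.1 g, (Polynomial.mem_nthRootsFinset hℓ0 1).mpr (hroot χ.1 χ.2 g)⟩ with hΦdef
  have hΦ : Function.Injective Φ := by
    intro g h hgh
    apply hfinj
    have hker : ∀ χ : G → L, P χ ≤ LinearMap.ker (f g - f h) := by
      intro χ
      by_cases hχ : P χ = ⊥
      · rw [hχ]; exact bot_le
      · intro x hx
        have e : χ g = χ h := by
          have := congrFun hgh ⟨χ, hχ⟩
          simpa [hΦdef] using this
        simp only [LinearMap.mem_ker, LinearMap.sub_apply, key χ g x hx, key χ h x hx, e,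
          sub_self]
    have hker' : LinearMap.ker (f g - f h) = ⊤ :=
      top_unique (hTop ▸ iSup_le hker)
    have : f g - f h = 0 := LinearMap.ker_eq_top.mp hker'
    exact sub_eq_zero.mp this
  -- count
  calc Fintype.card G
      ≤ Fintype.card ({χ : G → L // P χ ≠ ⊥} → (Polynomial.nthRootsFinset ℓ (1 : L) : Finset L)) :=
        Fintype.card_le_of_injective Φ hΦ
    _ = Fintype.card (Polynomial.nthRootsFinset ℓ (1 : L) : Finset L)
          ^ Fintype.card {χ : G → L // P χ ≠ ⊥} := Fintype.card_fun
    _ ≤ ℓ ^ Fintype.card {χ : G → L // P χ ≠ ⊥} := by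
        apply Nat.pow_le_pow_left
        rw [Fintype.card_coe]
        exact le_trans (Multiset.toFinset_card_le _) (Polynomial.card_nthRoots ℓ 1)
    _ ≤ ℓ ^ n := Nat.pow_le_pow_right hℓ0 hcardS

/-- A strictly monotone sequence of primes `> 2` that are `≡ 1 mod ℓ`. -/
lemma exists_prime_seq (ℓ : ℕ) (hℓ : ℓ ≠ 0) :
    ∃ q : ℕ → ℕ, StrictMono q ∧ ∀ i, (q i).Prime ∧ 2 < q i ∧ q i ≡ 1 [MOD ℓ] := by
  have H : ∀ a : ℕ, ∃ p, p.Prime ∧ p > a ∧ p ≡ 1 [MOD ℓ] := fun a =>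
    Nat.exists_prime_gt_modEq_one a hℓ
  choose g hg1 hg2 hg3 using H
  have hge : ∀ k : ℕ, 2 ≤ g^[k] 2 := by
    intro k
    induction k with
    | zero => simp
    | succ k ih =>
      rw [Function.iterate_succ_apply']
      exact le_trans ih (le_of_lt (hg2 _))
  refine ⟨fun i => g^[i + 1] 2, ?_, ?_⟩
  · apply strictMono_nat_of_lt_succ
    intro i
    rw [Function.iterate_succ_apply' g (i + 1)]
    exact hg2 _
  · intro i
    simp only [Function.iterate_succ_apply']
    exact ⟨hg1 _, lt_of_le_of_lt (hge i) (hg2 _), hg3 _⟩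

/-- An element of order `ℓ` yields an injective hom from `Multiplicative (ZMod ℓ)`. -/
lemma powHom_exists {M : Type} [CommGroup M] (ℓ : ℕ) [NeZero ℓ] (g : M)
    (hg : orderOf g = ℓ) :
    ∃ φ : Multiplicative (ZMod ℓ) →* M, Function.Injective φ := by
  have hmod : ∀ v : ℕ, g ^ (v % ℓ) = g ^ v := by
    intro v
    rw [← hg]
    exact pow_mod_orderOf g v
  refine ⟨{ toFun := fun x => g ^ (x.toAdd).val
            map_one' := by simp
            map_mul' := ?_ }, ?_⟩
  · intro a b
    show g ^ (a.toAdd + b.toAdd).val = g ^ (a.toAdd).val * g ^ (b.toAdd).val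
    rw [ZMod.val_add, hmod, pow_add]
  · intro a b hab
    simp only [MonoidHom.coe_mk, OneHom.coe_mk] at hab
    have h1 : (a.toAdd).val = (b.toAdd).val := by
      refine pow_injOn_Iio_orderOf ?_ ?_ hab <;>
        · simp only [Set.mem_Iio, hg]; exact ZMod.val_lt _
    have h2 : a.toAdd = b.toAdd := ZMod.val_injective ℓ h1
    exact Multiplicative.toAdd.injective h2

theorem stmt_0 (K : Type) [Field K] (n : ℕ) :
    ¬ ∃ f : (∀ p : {p : ℕ // p.Prime ∧ Odd p}, (ZMod p.1)ˣ) →* GL (Fin n) K,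
      Function.Injective f := by
  classical
  rintro ⟨f, hf⟩
  set L := AlgebraicClosure K
  -- push everything into the algebraic closure
  let e : GL (Fin n) K →* GL (Fin n) L :=
    Units.map ((algebraMap K L).mapMatrix).toMonoidHom
  have he : Function.Injective e := by
    apply Units.map_injective
    intro A B h
    ext i j
    have h' := congrArg (fun M => M i j) h
    simpa [Matrix.map_apply] using (algebraMap K L).injective h'
  -- choose a prime ℓ invertible in L
  obtain ⟨ℓ, hℓp, hℓL⟩ : ∃ ℓ : ℕ, ℓ.Prime ∧ (ℓ : L) ≠ 0 := by
    by_cases hchar : ringChar L = 3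
    · refine ⟨5, by norm_num, fun h0 => ?_⟩
      have := ringChar.dvd h0
      rw [hchar] at this
      norm_num at this
    · refine ⟨3, by norm_num, fun h0 => ?_⟩
      have hdvd := ringChar.dvd h0
      rcases (Nat.dvd_prime (by norm_num)).mp hdvd with h1 | h3
      · exact CharP.ringChar_ne_one h1
      · exact hchar h3
  haveI : Fact ℓ.Prime := ⟨hℓp⟩
  haveI : NeZero ℓ := ⟨hℓp.ne_zero⟩
  -- choose n+1 distinct odd primes ≡ 1 mod ℓ
  obtain ⟨q, hqmono, hq⟩ := exists_prime_seq ℓ hℓp.ne_zero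
  let Q : Fin (n + 1) → {p : ℕ // p.Prime ∧ Odd p} := fun i =>
    ⟨q i, (hq i).1, (hq i).1.odd_of_ne_two (by have := (hq i).2.1; omega)⟩
  have hQinj : Function.Injective Q := by
    intro i j h
    exact Fin.val_injective (hqmono.injective (congrArg Subtype.val h))
  -- an injective hom from Multiplicative (ZMod ℓ) into each chosen factor
  have hφ : ∀ i : Fin (n + 1),
      ∃ φ : Multiplicative (ZMod ℓ) →* (ZMod (Q i).1)ˣ, Function.Injective φ := by
    intro i
    haveI : NeZero (Q i).1 := ⟨(hq i).1.ne_zero⟩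
    have hdvd : ℓ ∣ Fintype.card (ZMod (Q i).1)ˣ := by
      rw [ZMod.card_units_eq_totient, Nat.totient_prime (hq i).1]
      exact (Nat.modEq_iff_dvd' (by have := (hq i).2.1; omega)).mp ((hq i).2.2).symm
    obtain ⟨g, hg⟩ := exists_prime_orderOf_dvd_card ℓ hdvd
    exact powHom_exists ℓ g hg
  choose φ hφinj using hφ
  -- assemble the big hom
  let Ψ : (∀ _ : Fin (n + 1), Multiplicative (ZMod ℓ)) →*
      (∀ p : {p : ℕ // p.Prime ∧ Odd p}, (ZMod p.1)ˣ) :=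
    ∏ i : Fin (n + 1),
      (MonoidHom.mulSingle (fun p : {p : ℕ // p.Prime ∧ Odd p} => (ZMod p.1)ˣ)
        (Q i)).comp ((φ i).comp
          (Pi.evalMonoidHom (fun _ : Fin (n + 1) => Multiplicative (ZMod ℓ)) i))
  have hΨval : ∀ (x : ∀ _ : Fin (n + 1), Multiplicative (ZMod ℓ)) (i : Fin (n + 1)),
      Ψ x (Q i) = φ i (x i) := by
    intro x i
    have h1 : Ψ x = ∏ j : Fin (n + 1), Pi.mulSingle (Q j) (φ j (x j)) := by
      rw [MonoidHom.finset_prod_apply]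
      rfl
    rw [h1, Finset.prod_apply]
    rw [Finset.prod_eq_single_of_mem i (Finset.mem_univ i)]
    · rw [Pi.mulSingle_eq_same]
    · intro j _ hji
      exact Pi.mulSingle_eq_of_ne (fun hc => hji ((hQinj hc).symm)) _
  have hΨ : Function.Injective Ψ := by
    rw [injective_iff_map_eq_one]
    intro x hx
    funext i
    have h1 : φ i (x i) = 1 := by
      rw [← hΨval x i, hx]
      rfl
    exact (injective_iff_map_eq_one (φ i)).mp (hφinj i) _ h1
  -- exponent divides ℓ
  have hord : ∀ x : (∀ _ : Fin (n + 1), Multiplicative (ZMod ℓ)), x ^ ℓ = 1 := by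
    intro x
    funext i
    show (x i) ^ ℓ = 1
    calc (x i) ^ ℓ = Multiplicative.ofAdd (ℓ • (x i).toAdd) := by
          rw [ofAdd_nsmul, ofAdd_toAdd]
      _ = 1 := by
          rw [nsmul_eq_mul, ZMod.natCast_self, zero_mul]
          rfl
  -- apply the counting lemma
  have hcount := counting_lemma (L := L) n ℓ hℓp.pos hℓL ((e.comp f).comp Ψ)
    (by
      rw [MonoidHom.coe_comp, MonoidHom.coe_comp]
      exact he.comp (hf.comp hΨ)) hord
  have hcardG : Fintype.card (∀ _ : Fin (n + 1), Multiplicative (ZMod ℓ)) = ℓ ^ (n + 1) := by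
    simp [ZMod.card]
  rw [hcardG] at hcount
  have hlt : ℓ ^ n < ℓ ^ (n + 1) :=
    Nat.pow_lt_pow_right hℓp.one_lt (Nat.lt_succ_self n)
  omega
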